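/- Let C be an N×N diagonal complex matrix with nonnegative real diagonal entries c_0,…,c_{N−1}, let Δ be a k×k Hermitian positive semidefinite complex matrix, let D ∈ ℂ^k (viewed as a k×1 matrix), and let p ≥ 0 be real. Then the matrix p·Δ⊗C + I_{kN} is invertible, and the N×N matrix C − p · (D⊗C)† (p·Δ⊗C + I_{kN})^{-1} (D⊗C) is diagonal, with l-th diagonal entry equal to c_l − p · c_l² · D† (p·c_l·Δ + I_k)^{-1} D. -/

import Mathlib

open Matrix Kronecker ComplexOrder

lemma psd_smul_real {k : ℕ} {Δ : Matrix (Fin k) (Fin k) ℂ} (hΔ : Δ.PosSemidef)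
    {r : ℝ} (hr : 0 ≤ r) : (((r : ℂ)) • Δ).PosSemidef := by
  constructor
  · unfold Matrix.IsHermitian
    rw [conjTranspose_smul, hΔ.1.eq]
    congr 1
    simp
  · intro x
    exact (hΔ.smul (Complex.zero_le_real.mpr hr)).2 x

/-- Let `C` be an `N × N` diagonal complex matrix with nonnegative real diagonal entries `c l`,
`Δ` a `k × k` Hermitian positive semidefinite complex matrix, `D ∈ ℂ^k` (viewed as a `k × 1`
column), and `p ≥ 0`.  Then `p·Δ⊗C + I` is invertible, and the `N × N` matrix
`C − p (D⊗C)† (p·Δ⊗C + I)⁻¹ (D⊗C)` is diagonal with `l`-th diagonal entry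
`c l − p (c l)² D† (p c_l Δ + I)⁻¹ D`. -/
theorem kronecker_estimation_error_diagonal (k N : ℕ) (c : Fin N → ℝ) (hc : ∀ l, 0 ≤ c l)
    (C : Matrix (Fin N) (Fin N) ℂ) (hC : C = Matrix.diagonal fun l => (c l : ℂ))
    (Δ : Matrix (Fin k) (Fin k) ℂ) (hΔ : Δ.PosSemidef) (D : Fin k → ℂ) (p : ℝ) (hp : 0 ≤ p) :
    IsUnit ((p : ℂ) • (Δ ⊗ₖ C) + 1) ∧
      ∀ l l' : Fin N,
        C l l' - (p : ℂ) *
            (((Matrix.of fun i (_ : Fin 1) => D i) ⊗ₖ C)ᴴ * ((p : ℂ) • (Δ ⊗ₖ C) + 1)⁻¹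
                * ((Matrix.of fun i (_ : Fin 1) => D i) ⊗ₖ C)) (0, l) (0, l')
          = if l = l' then
              (c l : ℂ) - (p : ℂ) * (c l : ℂ) ^ 2 *
                (star D ⬝ᵥ (((p * c l : ℝ) : ℂ) • Δ + 1)⁻¹ *ᵥ D)
            else 0 := by
  set A : Fin N → Matrix (Fin k) (Fin k) ℂ :=
    fun l => ((p * c l : ℝ) : ℂ) • Δ + 1 with hA
  have hApd : ∀ l, (A l).PosDef := fun l =>
    Matrix.PosDef.posSemidef_add (psd_smul_real hΔ (mul_nonneg hp (hc l))) Matrix.PosDef.one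
  have hM : (p : ℂ) • (Δ ⊗ₖ C) + 1 = Matrix.blockDiagonal A := by
    ext ⟨i, l0⟩ ⟨j, l0'⟩
    simp only [hC, hA, Matrix.add_apply, Matrix.smul_apply, kroneckerMap_apply,
      blockDiagonal_apply', Matrix.one_apply, diagonal_apply, Prod.mk.injEq, smul_eq_mul]
    by_cases h : l0 = l0'
    · subst h
      by_cases hij : i = j <;> simp [hij] <;> push_cast <;> ring
    · simp [h]
  have hBmul : Matrix.blockDiagonal A * Matrix.blockDiagonal (fun l => (A l)⁻¹) = 1 := by
    rw [← blockDiagonal_mul]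
    have h1 : (fun l => A l * (A l)⁻¹) = (1 : Fin N → Matrix (Fin k) (Fin k) ℂ) :=
      funext fun l =>
        (Matrix.mul_nonsing_inv _ ((Matrix.isUnit_iff_isUnit_det _).mp (hApd l).isUnit)).trans rfl
    rw [h1, blockDiagonal_one]
  have hunit : IsUnit (Matrix.blockDiagonal A) := by
    rw [Matrix.isUnit_iff_isUnit_det]
    have := congrArg Matrix.det hBmul
    rw [Matrix.det_mul, Matrix.det_one] at this
    exact IsUnit.of_mul_eq_one _ this
  have hinv : (Matrix.blockDiagonal A)⁻¹ = Matrix.blockDiagonal fun l => (A l)⁻¹ :=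
    Matrix.inv_eq_right_inv hBmul
  refine ⟨hM ▸ hunit, fun l l' => ?_⟩
  have hX : (Matrix.of fun i (_ : Fin 1) => D i) ⊗ₖ C
      = Matrix.blockDiagonal fun l => (c l : ℂ) • (Matrix.of fun i (_ : Fin 1) => D i) := by
    ext ⟨i, l0⟩ ⟨j, l0'⟩
    simp only [hC, kroneckerMap_apply, blockDiagonal_apply', Matrix.smul_apply, Matrix.of_apply,
      diagonal_apply, smul_eq_mul]
    by_cases h : l0 = l0' <;> simp [h, mul_comm]
  rw [hM, hinv, hX, blockDiagonal_conjTranspose, ← blockDiagonal_mul, ← blockDiagonal_mul,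
    blockDiagonal_apply', hC]
  by_cases h : l = l'
  · subst h
    rw [if_pos rfl, if_pos rfl, diagonal_apply_eq]
    have key : (((c l : ℂ) • (Matrix.of fun i (_ : Fin 1) => D i))ᴴ * (A l)⁻¹
        * ((c l : ℂ) • (Matrix.of fun i (_ : Fin 1) => D i))) 0 0
        = (c l : ℂ) ^ 2 * (star D ⬝ᵥ (A l)⁻¹ *ᵥ D) := by
      rw [conjTranspose_smul]
      simp only [Matrix.smul_mul, Matrix.mul_smul, Matrix.smul_apply]
      rw [smul_eq_mul, smul_eq_mul]
      have h2 : ((Matrix.of fun i (_ : Fin 1) => D i)ᴴ * (A l)⁻¹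
          * (Matrix.of fun i (_ : Fin 1) => D i)) 0 0 = star D ⬝ᵥ (A l)⁻¹ *ᵥ D := by
        simp only [Matrix.mul_apply, conjTranspose_apply, Matrix.of_apply, dotProduct, mulVec,
          dotProduct, Pi.star_apply, Finset.sum_mul, Finset.mul_sum]
        rw [Finset.sum_comm]
        exact Finset.sum_congr rfl fun j _ => Finset.sum_congr rfl fun i _ => by ring
      rw [h2]
      have hsc : star ((c l : ℂ)) = (c l : ℂ) := by simp
      rw [hsc]
      ring
    rw [key]
    ring
  · simp [h]
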